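/- Let p, k ∈ ℕ with k ≤ p, let U = [U⋆, U⊥] ∈ O(p) be orthogonal with U⋆ ∈ ℝ^{p×k}, and let V ∈ O(p,k) be such that V̄⋆ := U⋆ᵀV ∈ ℝ^{k×k} is invertible. Then: (i) Q(V) is a k×k orthogonal matrix; (ii) I_k − Z(V)ᵀZ(V) = V̄⋆V̄⋆ᵀ, so in particular I_k − Z(V)ᵀZ(V) is positive semidefinite; and (iii) V = U·[(I_k − Z(V)ᵀZ(V))^{1/2}; Z(V)]·Q(V), where [(I_k − Z(V)ᵀZ(V))^{1/2}; Z(V)] denotes the p×k matrix stacking the positive semidefinite square root (I_k − Z(V)ᵀZ(V))^{1/2} on top of Z(V) ∈ ℝ^{(p−k)×k}. -/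

import Mathlib

open MeasureTheory Matrix Filter Topology ProbabilityTheory
open scoped ENNReal NNReal

noncomputable section

/-- Entrywise (Borel) measurable space on real matrices. -/
instance matrixMeasurableSpace {m n : Type*} : MeasurableSpace (Matrix m n ℝ) :=
  MeasurableSpace.pi

/-- The Stiefel manifold `O(p,k)` of `p × k` real matrices with orthonormal columns. -/
def Stiefel (p k : ℕ) : Type :=
  {V : Matrix (Fin p) (Fin k) ℝ // Vᵀ * V = 1}

instance {p k : ℕ} : MeasurableSpace (Stiefel p k) :=
  inferInstanceAs (MeasurableSpace {V : Matrix (Fin p) (Fin k) ℝ // Vᵀ * V = 1})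

/-- Left rotation of a Stiefel point by an orthogonal matrix. -/
def stiefelRot {p k : ℕ} {A : Matrix (Fin p) (Fin p) ℝ} (hA : Aᵀ * A = 1)
    (V : Stiefel p k) : Stiefel p k :=
  ⟨A * V.1, by
    rw [Matrix.transpose_mul, Matrix.mul_assoc, ← Matrix.mul_assoc Aᵀ A V.1, hA,
      Matrix.one_mul]
    exact V.2⟩

/-- `ξ` is the uniform (Haar) distribution on `O(p,k)`: it is characterized (uniquely) as a
rotation-invariant Borel probability measure on the Stiefel manifold. -/
def IsUniformStiefel (p k : ℕ) (ξ : Measure (Stiefel p k)) : Prop :=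
  IsProbabilityMeasure ξ ∧
    ∀ (A : Matrix (Fin p) (Fin p) ℝ) (hA : Aᵀ * A = 1),
      Measure.map (stiefelRot hA) ξ = ξ

/-- Normalizing constant of the Gibbs distribution. -/
def gibbsZ {p k : ℕ} (ξ : Measure (Stiefel p k)) (S : Matrix (Fin p) (Fin p) ℝ)
    (β : ℝ) : ℝ :=
  ∫ V : Stiefel p k, Real.exp ((p : ℝ) * β / 2 * ((V.1)ᵀ * S * V.1).trace) ∂ξ

/-- The Gibbs distribution `ν(· | S, β, k)` relative to the uniform distribution `ξ` on
`O(p,k)`. -/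
def gibbs {p k : ℕ} (ξ : Measure (Stiefel p k)) (S : Matrix (Fin p) (Fin p) ℝ)
    (β : ℝ) : Measure (Stiefel p k) :=
  ξ.withDensity fun V =>
    ENNReal.ofReal
      (Real.exp ((p : ℝ) * β / 2 * ((V.1)ᵀ * S * V.1).trace) / gibbsZ ξ S β)

/-- `eigAt l j p` is the (0-based) `j`-th entry of the decreasing eigenvalue list `l p`
(junk value `0` when `j ≥ p`). -/
def eigAt (l : ∀ p, Fin p → ℝ) (j p : ℕ) : ℝ :=
  if h : j < p then l p ⟨j, h⟩ else 0

/-- `eig1 l j` : 0-based `j`-th entry of a single eigenvalue list. -/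
def eig1 {p : ℕ} (l : Fin p → ℝ) (j : ℕ) : ℝ :=
  if h : j < p then l ⟨j, h⟩ else 0

/-- Indices of the top `k` eigenvalues. -/
def topIdx (p k : ℕ) : Finset (Fin p) := Finset.univ.filter fun i => (i : ℕ) < k

/-- Indices of the smallest `p - k` eigenvalues. -/
def bulkIdx (p k : ℕ) : Finset (Fin p) := Finset.univ.filter fun i => k ≤ (i : ℕ)

/-- Hilbert transform `H_μ(x) = ∫ dμ(t) / (x - t)`. -/
def hilbert (μ : Measure ℝ) (x : ℝ) : ℝ := ∫ t, (x - t)⁻¹ ∂μ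

/-- Derivative of the Hilbert transform, `H'_μ(x) = -∫ dμ(t) / (x - t)²`. -/
def hilbertDeriv (μ : Measure ℝ) (x : ℝ) : ℝ := -∫ t, ((x - t) ^ 2)⁻¹ ∂μ

/-- Assumption (MAT) on a sequence of symmetric matrices `S p`, presented together with (any)
orthogonal eigendecomposition `S p = U p * diagonal (l p) * (U p)ᵀ` with decreasing
eigenvalues `l p`.  The limits are `γ 1 ≥ ⋯ ≥ γ k > γ (k+1) > 0` (1-based indexing) and the
limiting spectral measure is `μ`, a probability measure with compact support contained in
`(-∞, γ (k+1)]`. -/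
def AssumptionMAT (k : ℕ) (γ : ℕ → ℝ) (μ : Measure ℝ)
    (S : ∀ p, Matrix (Fin p) (Fin p) ℝ) (l : ∀ p, Fin p → ℝ)
    (U : ∀ p, Matrix (Fin p) (Fin p) ℝ) : Prop :=
  0 < k ∧
  (∀ p, (U p)ᵀ * U p = 1) ∧
  (∀ p, S p = U p * Matrix.diagonal (l p) * (U p)ᵀ) ∧
  (∀ p, Antitone (l p)) ∧
  (∀ i j : ℕ, 1 ≤ i → i ≤ j → j ≤ k + 1 → γ j ≤ γ i) ∧
  γ (k + 1) < γ k ∧ 0 < γ (k + 1) ∧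
  IsProbabilityMeasure μ ∧
  (∃ a : ℝ, μ (Set.Icc a (γ (k + 1)))ᶜ = 0) ∧
  (∀ i : ℕ, 1 ≤ i → i ≤ k + 1 →
    Tendsto (fun p : ℕ => eigAt l (i - 1) p) atTop (nhds (γ i))) ∧
  (∀ f : BoundedContinuousFunction ℝ ℝ,
    Tendsto (fun p : ℕ => ((p : ℝ) - (k : ℝ))⁻¹ * ∑ i ∈ bulkIdx p k, f (l p i))
      atTop (nhds (∫ t, f t ∂μ)))

/-- Frobenius norm. -/
def frob {m n : Type*} [Fintype m] [Fintype n] (A : Matrix m n ℝ) : ℝ :=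
  Real.sqrt (∑ i, ∑ j, A i j ^ 2)

/-- `ℓ² → ℓ²` operator norm. -/
def opNorm {m n : Type*} [Fintype m] [Fintype n] (A : Matrix m n ℝ) : ℝ :=
  sSup {r : ℝ | ∃ x : n → ℝ, (∑ j, x j ^ 2) ≤ 1 ∧ r = Real.sqrt (∑ i, (A.mulVec x i) ^ 2)}

/-- The `p × k` matrix formed by the first `k` columns of `U` (junk `0` when `p < k`). -/
def firstCols (p k : ℕ) (U : Matrix (Fin p) (Fin p) ℝ) : Matrix (Fin p) (Fin k) ℝ :=
  Matrix.of fun r j => if h : (j : ℕ) < p then U r ⟨j, h⟩ else 0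

/-- The `p × (p-k)` matrix formed by the last `p - k` columns of `U`. -/
def lastCols (p k : ℕ) (U : Matrix (Fin p) (Fin p) ℝ) : Matrix (Fin p) (Fin (p - k)) ℝ :=
  Matrix.of fun r c => U r ⟨k + (c : ℕ), by have := c.isLt; omega⟩

/-- Total variation distance `sup_A |μ(A) - ν(A)|`. -/
def tvDist {Ω : Type*} [MeasurableSpace Ω] (μ ν : Measure Ω) : ℝ :=
  sSup {r : ℝ | ∃ A : Set Ω, MeasurableSet A ∧ r = |(μ A).toReal - (ν A).toReal|}

/-- Trade-off function `T(ν₀, ν₁)(α)`. -/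
def tradeoff {Ω : Type*} [MeasurableSpace Ω] (ν₀ ν₁ : Measure Ω) (α : ℝ) : ℝ :=
  sInf {r : ℝ | ∃ φ : Ω → ℝ, Measurable φ ∧ (∀ x, φ x ∈ Set.Icc (0 : ℝ) 1) ∧
    (∫ x, φ x ∂ν₀) ≤ α ∧ r = 1 - ∫ x, φ x ∂ν₁}

open Classical in
/-- Rényi divergence of order `a` of `ν₁` with respect to `ν₀` (with value `⊤` when
`ν₁` is not absolutely continuous w.r.t. `ν₀`). -/
def renyiDiv {Ω : Type*} [MeasurableSpace Ω] (a : ℝ) (ν₁ ν₀ : Measure Ω) : EReal :=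
  if ν₁ ≪ ν₀ then
    (((a - 1)⁻¹ * Real.log (∫ x, ((ν₁.rnDeriv ν₀ x).toReal) ^ a ∂ν₀) : ℝ) : EReal)
  else ⊤

/-- Sample covariance of a dataset. -/
def sampleCov (p : ℕ) (X : Multiset (Fin p → ℝ)) : Matrix (Fin p) (Fin p) ℝ :=
  ((Multiset.card X : ℝ))⁻¹ • (X.map fun x => vecMulVec x x).sum

/-- Assumption (DATA). -/
def AssumptionDATA (k : ℕ) (θ : ℝ) (γ : ℕ → ℝ) (μ : Measure ℝ)
    (X : ∀ p, Multiset (Fin p → ℝ)) (l : ∀ p, Fin p → ℝ)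
    (U : ∀ p, Matrix (Fin p) (Fin p) ℝ) : Prop :=
  0 < θ ∧
  (∀ p, ∀ x ∈ X p, (∑ j, x j ^ 2) ≤ (p : ℝ)) ∧
  Tendsto (fun p : ℕ => (Multiset.card (X p) : ℝ) / (p : ℝ) ^ ((3 : ℝ) / 2)) atTop
    (nhds θ) ∧
  AssumptionMAT k γ μ (fun p => sampleCov p (X p)) l U

open Classical in
/-- `Y` is a neighboring dataset of `X`: add one norm-bounded point or remove one point. -/
def IsNeighbor (p : ℕ) (X Y : Multiset (Fin p → ℝ)) : Prop :=
  (∃ x : Fin p → ℝ, (∑ j, x j ^ 2) ≤ (p : ℝ) ∧ Y = x ::ₘ X) ∨ ∃ x ∈ X, Y = X.erase x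

open Classical in
/-- Neighboring datasets without the norm constraint. -/
def IsNeighborFree (p : ℕ) (X Y : Multiset (Fin p → ℝ)) : Prop :=
  (∃ x : Fin p → ℝ, Y = x ::ₘ X) ∨ ∃ x ∈ X, Y = X.erase x

/-- The asymptotic privacy parameter `σ²_β` (with `Hk = H_μ(γ_k)`, `Hk' = H'_μ(γ_k)`). -/
def sigmaBetaSq (θ Δ Hk Hk' β : ℝ) : ℝ :=
  if Hk - Δ * Hk' ≤ β then
    1 / (2 * Δ * θ ^ 2) * ((β - Hk) ^ 2 / (2 * (β - Hk) + Δ * Hk'))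
  else -Hk' / (2 * θ ^ 2)

/-- Empirical Hilbert transform `H_Σ`. -/
def empH (p k : ℕ) (l : Fin p → ℝ) (x : ℝ) : ℝ :=
  ((p : ℝ))⁻¹ * ∑ i ∈ bulkIdx p k, (x - l i)⁻¹

/-- Empirical kernel `K_Σ`. -/
def empK (p k : ℕ) (l : Fin p → ℝ) (x y : ℝ) : ℝ :=
  ((p : ℝ))⁻¹ * ∑ i ∈ bulkIdx p k, ((x - l i) * (y - l i))⁻¹

/-- The variance function `σ²_Σ(E, β)`, expressed through the eigendecomposition
`Σ = U diag(l) Uᵀ` (decreasing `l`); `(Uᵀ E U) j m = u_jᵀ E u_m`. -/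
def varFun (p k : ℕ) (l : Fin p → ℝ) (U E : Matrix (Fin p) (Fin p) ℝ) (β : ℝ) : ℝ :=
  1 / 2 * ∑ j ∈ topIdx p k, ∑ m ∈ topIdx p k,
      empK p k l (l j) (l m) * ((Uᵀ * E * U) j m) ^ 2 +
    ∑ j ∈ topIdx p k, ∑ i ∈ bulkIdx p k,
      (β - empH p k l (l j)) / (l j - l i) * ((Uᵀ * E * U) i j) ^ 2

/-- `j`-th column of a square matrix. -/
def matCol {p : ℕ} (U : Matrix (Fin p) (Fin p) ℝ) (j : Fin p) : Fin p → ℝ := fun r => U r j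

/-- The centering matrix `M_β(Σ)`, via the eigendecomposition `Σ = U diag(l) Uᵀ`. -/
def centerM (p k : ℕ) (l : Fin p → ℝ) (U : Matrix (Fin p) (Fin p) ℝ) (β : ℝ) :
    Matrix (Fin p) (Fin p) ℝ :=
  (∑ j ∈ topIdx p k, (1 - empH p k l (l j) / β) • vecMulVec (matCol U j) (matCol U j)) +
    ((p : ℝ) * β)⁻¹ •
      ∑ j ∈ topIdx p k, ∑ i ∈ bulkIdx p k,
        (l j - l i)⁻¹ • vecMulVec (matCol U i) (matCol U i)

open Classical in
/-- Spectral functional calculus for symmetric matrices (junk value `0` otherwise). -/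
def matFun {k : ℕ} (f : ℝ → ℝ) (S : Matrix (Fin k) (Fin k) ℝ) :
    Matrix (Fin k) (Fin k) ℝ :=
  if hS : S.IsHermitian then
    (hS.eigenvectorUnitary : Matrix (Fin k) (Fin k) ℝ) *
        Matrix.diagonal (fun i => f (hS.eigenvalues i)) *
      star (hS.eigenvectorUnitary : Matrix (Fin k) (Fin k) ℝ)
  else 0

/-- Vertical stacking of a `k × k` block on top of a `(p-k) × k` block. -/
def vstack {p k : ℕ} (A : Matrix (Fin k) (Fin k) ℝ)
    (B : Matrix (Fin (p - k)) (Fin k) ℝ) : Matrix (Fin p) (Fin k) ℝ :=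
  Matrix.of fun r c =>
    if h : (r : ℕ) < k then A ⟨r, h⟩ c
    else B ⟨(r : ℕ) - k, by have := r.isLt; omega⟩ c

/-- The law of the Gaussian matrix `Z` with independent entries
`Z i j ∼ N(0, 1/(β p (λ_{j+1} - λ_{k+i+1})))` (paper indexing). -/
def gaussZMeasure (p k : ℕ) (l : Fin p → ℝ) (β : ℝ) :
    Measure (Matrix (Fin (p - k)) (Fin k) ℝ) :=
  Measure.pi fun _i : Fin (p - k) => Measure.pi fun _j : Fin k =>
    gaussianReal 0 (Real.toNNReal ((β * p * (eig1 l (_j : ℕ) - eig1 l (k + (_i : ℕ))))⁻¹))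

/-- Output distribution of the sampling algorithm, as a measure on `p × k` matrices. -/
def samplerLaw (p k : ℕ) (U : Matrix (Fin p) (Fin p) ℝ) (l : Fin p → ℝ) (β : ℝ)
    (κ : Measure (Stiefel k k)) : Measure (Matrix (Fin p) (Fin k) ℝ) :=
  Measure.map
    (fun QZ : Stiefel k k × Matrix (Fin (p - k)) (Fin k) ℝ =>
      U * vstack (matFun (fun t => Real.sqrt (max t 0)) (1 - (QZ.2)ᵀ * QZ.2)) QZ.2 *
        (QZ.1).1)
    (κ.prod (gaussZMeasure p k l β))

/-- `V̄⋆ = U⋆ᵀ V`. -/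
def Vbar (p k : ℕ) (U : Matrix (Fin p) (Fin p) ℝ) (V : Matrix (Fin p) (Fin k) ℝ) :
    Matrix (Fin k) (Fin k) ℝ :=
  (firstCols p k U)ᵀ * V

/-- `Q(V) = ((V̄⋆ V̄⋆ᵀ)^{1/2})⁻¹ V̄⋆` (Mathlib's matrix inverse is `0` on singular input). -/
def Qfun (p k : ℕ) (U : Matrix (Fin p) (Fin p) ℝ) (V : Matrix (Fin p) (Fin k) ℝ) :
    Matrix (Fin k) (Fin k) ℝ :=
  (matFun Real.sqrt (Vbar p k U V * (Vbar p k U V)ᵀ))⁻¹ * Vbar p k U V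

/-- `Z(V) = V̄⊥ Q(V)ᵀ`. -/
def Zfun (p k : ℕ) (U : Matrix (Fin p) (Fin p) ℝ) (V : Matrix (Fin p) (Fin k) ℝ) :
    Matrix (Fin (p - k)) (Fin k) ℝ :=
  (lastCols p k U)ᵀ * V * (Qfun p k U V)ᵀ

/-- Lebesgue measure on real matrices. -/
def matVolume (m n : ℕ) : Measure (Matrix (Fin m) (Fin n) ℝ) :=
  Measure.pi fun _ : Fin m => Measure.pi fun _ : Fin n => (volume : Measure ℝ)

open Classical in
/-- Tie-averaged, centered and normalized rank transform of the point `x` within the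
dataset `X`. -/
def rankVec (p : ℕ) (X : Multiset (Fin p → ℝ)) (x : Fin p → ℝ) : Fin p → ℝ := fun j =>
  2 / ((Multiset.card X : ℝ) - 1) *
    ((((X.filter fun y => y j < x j).card : ℝ) +
        (((X.filter fun y => y j = x j).card : ℝ) + 1) / 2) -
      ((Multiset.card X : ℝ) + 1) / 2)

/-- The rank covariance matrix `Σ_rk(X)`. -/
def rankCov (p : ℕ) (X : Multiset (Fin p → ℝ)) : Matrix (Fin p) (Fin p) ℝ :=
  sampleCov p (X.map (rankVec p X))

/-- Assumption (DATA-RANK). -/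
def AssumptionDATARank (k : ℕ) (θ : ℝ) (γ : ℕ → ℝ) (μ : Measure ℝ)
    (X : ∀ p, Multiset (Fin p → ℝ)) (l : ∀ p, Fin p → ℝ)
    (U : ∀ p, Matrix (Fin p) (Fin p) ℝ) : Prop :=
  0 < θ ∧
  Tendsto (fun p : ℕ => (Multiset.card (X p) : ℝ) / (p : ℝ) ^ ((3 : ℝ) / 2)) atTop
    (nhds θ) ∧
  AssumptionMAT k γ μ (fun p => rankCov p (X p)) l U

end

section StatementTwelveAux

open Matrix

private lemma sum_split_aux {p k : ℕ} (hpk : k ≤ p) (f : Fin p → ℝ) :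
    ∑ j, f j = (∑ j : Fin k, f ⟨j, lt_of_lt_of_le j.isLt hpk⟩)
      + ∑ c : Fin (p - k), f ⟨k + c, by have := c.isLt; omega⟩ := by
  let e : Fin k ⊕ Fin (p - k) ≃ Fin p :=
    (finSumFinEquiv).trans (finCongr (by omega))
  rw [← e.sum_comp f, Fintype.sum_sum_type]
  congr 1

private lemma cols_decomp {p k : ℕ} (hpk : k ≤ p) (U : Matrix (Fin p) (Fin p) ℝ) :
    firstCols p k U * (firstCols p k U)ᵀ + lastCols p k U * (lastCols p k U)ᵀ = U * Uᵀ := by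
  ext r s
  simp only [Matrix.add_apply, Matrix.mul_apply, Matrix.transpose_apply, firstCols, lastCols,
    Matrix.of_apply]
  rw [sum_split_aux hpk (fun j => U r j * U s j)]
  congr 1
  · refine Finset.sum_congr rfl fun j _ => ?_
    rw [dif_pos (lt_of_lt_of_le j.isLt hpk), dif_pos (lt_of_lt_of_le j.isLt hpk)]

private lemma mul_vstack_eq {p k : ℕ} (hpk : k ≤ p) (U : Matrix (Fin p) (Fin p) ℝ)
    (X : Matrix (Fin k) (Fin k) ℝ) (Y : Matrix (Fin (p - k)) (Fin k) ℝ) :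
    U * vstack X Y = firstCols p k U * X + lastCols p k U * Y := by
  ext r c
  simp only [Matrix.add_apply, Matrix.mul_apply, Matrix.transpose_apply, firstCols, lastCols,
    vstack, Matrix.of_apply]
  rw [sum_split_aux hpk (fun j => U r j * (if h : (j : ℕ) < k then X ⟨j, h⟩ c
    else Y ⟨(j : ℕ) - k, by have := j.isLt; omega⟩ c))]
  congr 1
  · refine Finset.sum_congr rfl fun j _ => ?_
    rw [dif_pos j.isLt, dif_pos (lt_of_lt_of_le j.isLt hpk)]
  · refine Finset.sum_congr rfl fun c' _ => ?_
    rw [dif_neg (by simp)]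
    have h2 : ∀ (m : ℕ) (hm : m < p - k), m = (c' : ℕ) → Y ⟨m, hm⟩ c = Y c' c := by
      rintro m hm rfl; rfl
    exact congrArg (fun t => U r ⟨k + (c' : ℕ), by have := c'.isLt; omega⟩ * t)
      (h2 (k + (c' : ℕ) - k) (by have := c'.isLt; omega) (by omega))

/-- Square root of a real positive semidefinite matrix (replacement for the removed API). -/
noncomputable def Matrix.PosSemidef.sqrt {n : ℕ} {S : Matrix (Fin n) (Fin n) ℝ}
    (hS : S.PosSemidef) : Matrix (Fin n) (Fin n) ℝ :=
  (hS.1.eigenvectorUnitary : Matrix (Fin n) (Fin n) ℝ) *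
      Matrix.diagonal (fun i => Real.sqrt (hS.1.eigenvalues i)) *
    star (hS.1.eigenvectorUnitary : Matrix (Fin n) (Fin n) ℝ)

lemma Matrix.PosSemidef.sqrt_eq_cfc {n : ℕ} {S : Matrix (Fin n) (Fin n) ℝ}
    (hS : S.PosSemidef) : hS.sqrt = cfc Real.sqrt S := by
  rw [hS.1.cfc_eq]
  rfl

lemma Matrix.PosSemidef.sqrt_mul_self {n : ℕ} {S : Matrix (Fin n) (Fin n) ℝ}
    (hS : S.PosSemidef) : hS.sqrt * hS.sqrt = S := by
  have hsa : IsSelfAdjoint S := hS.1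
  rw [hS.sqrt_eq_cfc, ← cfc_mul Real.sqrt Real.sqrt S]
  have h : (spectrum ℝ S).EqOn (fun x => Real.sqrt x * Real.sqrt x) id := by
    intro x hx
    rw [hS.1.spectrum_real_eq_range_eigenvalues] at hx
    obtain ⟨i, rfl⟩ := hx
    exact Real.mul_self_sqrt (hS.eigenvalues_nonneg i)
  rw [cfc_congr h, cfc_id ℝ S]

lemma Matrix.PosSemidef.posSemidef_sqrt {n : ℕ} {S : Matrix (Fin n) (Fin n) ℝ}
    (hS : S.PosSemidef) : hS.sqrt.PosSemidef := by
  have h : (Matrix.diagonal (fun i => Real.sqrt (hS.1.eigenvalues i))).PosSemidef :=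
    Matrix.posSemidef_diagonal_iff.2 (fun i => Real.sqrt_nonneg _)
  exact h.mul_mul_conjTranspose_same _

private lemma matFun_sqrt_eq {n : ℕ} {S : Matrix (Fin n) (Fin n) ℝ} (hS : S.PosSemidef) :
    matFun Real.sqrt S = hS.sqrt := by
  rw [matFun, dif_pos hS.1]
  rfl

end StatementTwelveAux

/-- If `V ∈ O(p,k)` is such that `V̄⋆ = U⋆ᵀV` is invertible, then
(i) `Q(V)` is orthogonal; (ii) `I - Z(V)ᵀZ(V) = V̄⋆V̄⋆ᵀ`, in particular it is positive
semidefinite; (iii) `V = U ⬝ [(I - Z(V)ᵀZ(V))^{1/2}; Z(V)] ⬝ Q(V)`. -/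
theorem statement12
    (p k : ℕ) (hpk : k ≤ p)
    (U : Matrix (Fin p) (Fin p) ℝ) (hU : Uᵀ * U = 1)
    (V : Matrix (Fin p) (Fin k) ℝ) (hV : Vᵀ * V = 1)
    (hinv : IsUnit (Vbar p k U V)) :
    -- (i) Q(V) is a k × k orthogonal matrix
    ((Qfun p k U V)ᵀ * Qfun p k U V = 1 ∧ Qfun p k U V * (Qfun p k U V)ᵀ = 1) ∧
    -- (ii) I - Z(V)ᵀ Z(V) = V̄⋆ V̄⋆ᵀ, which is positive semidefinite
    ((1 - (Zfun p k U V)ᵀ * Zfun p k U V = Vbar p k U V * (Vbar p k U V)ᵀ) ∧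
      (1 - (Zfun p k U V)ᵀ * Zfun p k U V).PosSemidef) ∧
    -- (iii) reconstruction of V
    V = U * vstack (matFun Real.sqrt (1 - (Zfun p k U V)ᵀ * Zfun p k U V)) (Zfun p k U V) *
          Qfun p k U V := by
  classical
  set W : Matrix (Fin k) (Fin k) ℝ := Vbar p k U V with hWdef
  set B : Matrix (Fin (p - k)) (Fin k) ℝ := (lastCols p k U)ᵀ * V with hBdef
  -- invertibility facts
  have hWd : IsUnit W.det := (Matrix.isUnit_iff_isUnit_det W).mp hinv
  have hWtd : IsUnit Wᵀ.det := by rwa [Matrix.det_transpose]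
  -- A := W * Wᵀ is PSD
  have hA : (W * Wᵀ).PosSemidef := by
    have h := Matrix.posSemidef_self_mul_conjTranspose W
    rwa [Matrix.conjTranspose_eq_transpose_of_trivial] at h
  set S : Matrix (Fin k) (Fin k) ℝ := hA.sqrt with hSdef
  have hSq : matFun Real.sqrt (W * Wᵀ) = S := matFun_sqrt_eq hA
  have hS1 : S * S = W * Wᵀ := hA.sqrt_mul_self
  have hSsym : Sᵀ = S := by
    rw [← Matrix.conjTranspose_eq_transpose_of_trivial]
    exact hA.posSemidef_sqrt.1
  have hSd : IsUnit S.det := by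
    have h : IsUnit (S.det * S.det) := by
      rw [← Matrix.det_mul, hS1, Matrix.det_mul, Matrix.det_transpose]
      exact hWd.mul hWd
    exact isUnit_of_mul_isUnit_left h
  have hQ : Qfun p k U V = S⁻¹ * W := by
    rw [Qfun, ← hWdef, hSq]
  -- (i)
  have hQQt : Qfun p k U V * (Qfun p k U V)ᵀ = 1 := by
    rw [hQ, Matrix.transpose_mul, Matrix.transpose_nonsing_inv, hSsym]
    calc S⁻¹ * W * (Wᵀ * S⁻¹) = S⁻¹ * (W * Wᵀ) * S⁻¹ := by
          simp only [Matrix.mul_assoc]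
      _ = S⁻¹ * (S * S) * S⁻¹ := by rw [hS1]
      _ = (S⁻¹ * S) * (S * S⁻¹) := by simp only [Matrix.mul_assoc]
      _ = 1 := by rw [Matrix.nonsing_inv_mul S hSd, Matrix.mul_nonsing_inv S hSd, Matrix.one_mul]
  have hQtQ : (Qfun p k U V)ᵀ * Qfun p k U V = 1 := by
    rw [hQ, Matrix.transpose_mul, Matrix.transpose_nonsing_inv, hSsym]
    calc Wᵀ * S⁻¹ * (S⁻¹ * W) = Wᵀ * (S * S)⁻¹ * W := by
          rw [Matrix.mul_inv_rev]; simp only [Matrix.mul_assoc]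
      _ = Wᵀ * (W * Wᵀ)⁻¹ * W := by rw [hS1]
      _ = (Wᵀ * Wᵀ⁻¹) * (W⁻¹ * W) := by rw [Matrix.mul_inv_rev]; simp only [Matrix.mul_assoc]
      _ = 1 := by rw [Matrix.mul_nonsing_inv Wᵀ hWtd, Matrix.nonsing_inv_mul W hWd, Matrix.one_mul]
  -- key orthogonality decomposition
  have hUUt : U * Uᵀ = 1 := mul_eq_one_comm.mp hU
  have hkey : Wᵀ * W + Bᵀ * B = 1 := by
    have h1 : Wᵀ * W + Bᵀ * B =
        Vᵀ * (firstCols p k U * (firstCols p k U)ᵀ + lastCols p k U * (lastCols p k U)ᵀ) * V := by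
      rw [hWdef, hBdef, Vbar]
      simp only [Matrix.transpose_mul, Matrix.transpose_transpose, Matrix.add_mul,
        Matrix.mul_add, Matrix.mul_assoc]
    rw [h1, cols_decomp hpk, hUUt, Matrix.mul_one, hV]
  have hBtB : Bᵀ * B = 1 - Wᵀ * W := by rw [← hkey, add_sub_cancel_left]
  -- Q * Wᵀ = S and W * Qᵀ = S
  have hQWt : Qfun p k U V * Wᵀ = S := by
    rw [hQ, Matrix.mul_assoc, ← hS1, ← Matrix.mul_assoc, Matrix.nonsing_inv_mul S hSd,
      Matrix.one_mul]
  have hWQt : W * (Qfun p k U V)ᵀ = S := by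
    have h := congrArg Matrix.transpose hQWt
    rwa [Matrix.transpose_mul, Matrix.transpose_transpose, hSsym] at h
  -- Z and ZᵀZ
  have hZ : Zfun p k U V = B * (Qfun p k U V)ᵀ := by
    rw [Zfun, hBdef]
  have hZtZ : (Zfun p k U V)ᵀ * Zfun p k U V = 1 - W * Wᵀ := by
    rw [hZ, Matrix.transpose_mul, Matrix.transpose_transpose]
    calc Qfun p k U V * Bᵀ * (B * (Qfun p k U V)ᵀ)
        = Qfun p k U V * (Bᵀ * B) * (Qfun p k U V)ᵀ := by simp only [Matrix.mul_assoc]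
      _ = Qfun p k U V * (1 - Wᵀ * W) * (Qfun p k U V)ᵀ := by rw [hBtB]
      _ = Qfun p k U V * (Qfun p k U V)ᵀ
            - (Qfun p k U V * Wᵀ) * (W * (Qfun p k U V)ᵀ) := by
          simp only [Matrix.mul_sub, Matrix.sub_mul, Matrix.mul_one, Matrix.mul_assoc]
      _ = 1 - W * Wᵀ := by rw [hQQt, hQWt, hWQt, hS1]
  have hii : 1 - (Zfun p k U V)ᵀ * Zfun p k U V = W * Wᵀ := by
    rw [hZtZ, sub_sub_cancel]
  refine ⟨⟨hQtQ, hQQt⟩, ⟨hii, hii ▸ hA⟩, ?_⟩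
  -- (iii)
  have hSQ : S * Qfun p k U V = W := by
    rw [hQ, ← Matrix.mul_assoc, Matrix.mul_nonsing_inv S hSd, Matrix.one_mul]
  have hZQ : Zfun p k U V * Qfun p k U V = B := by
    rw [hZ, Matrix.mul_assoc, hQtQ, Matrix.mul_one]
  rw [hii, hSq, mul_vstack_eq hpk, Matrix.add_mul, Matrix.mul_assoc, Matrix.mul_assoc, hSQ, hZQ,
    hWdef, hBdef, Vbar, ← Matrix.mul_assoc, ← Matrix.mul_assoc, ← Matrix.add_mul,
    cols_decomp hpk, hUUt, Matrix.one_mul]
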